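/- Let r ≥ 3 and s_1 ≤ … ≤ s_r be positive integers, and suppose ex(n, K_{r−1}, K_{s_1,…,s_{r−1}}) = Ω(n^{(r−1) − 1/s_1}) as n → ∞. Then ex(n, K_r, K_{s_1,…,s_r}) = Ω(n^{r − 1/s_1}). -/

import Mathlib

open SimpleGraph Finset Filter

/-- `G` is `H`-free: there is no copy of `H` in `G` as a subgraph. -/
def Free {α β : Type*} (H : SimpleGraph α) (G : SimpleGraph β) : Prop :=
  ¬ ∃ f : α ↪ β, ∀ a b, H.Adj a b → G.Adj (f a) (f b)

/-- Number of (unordered) copies of `F` in `G`: subgraphs of `G` isomorphic to `F`. -/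
noncomputable def copyCount {α β : Type*} (F : SimpleGraph α) (G : SimpleGraph β) : ℕ :=
  Nat.card {H : G.Subgraph // Nonempty (H.coe ≃g F)}

/-- The generalized Turán number: maximum number of copies of `F` in an `n`-vertex
`H`-free graph. -/
noncomputable def exGen {α β : Type*} (n : ℕ) (F : SimpleGraph α) (H : SimpleGraph β) : ℕ :=
  sSup {N | ∃ G : SimpleGraph (Fin n), _root_.Free H G ∧ copyCount F G = N}

/-- The complete multipartite graph with `r` parts of sizes `s 0, …, s (r-1)`. -/
def multipartite (r : ℕ) (s : Fin r → ℕ) : SimpleGraph (Σ i : Fin r, Fin (s i)) :=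
  completeMultipartiteGraph fun i => Fin (s i)

section Auxiliary

instance subgraphFinite {V : Type*} [Finite V] (G : SimpleGraph V) : Finite G.Subgraph := by
  have hinj : Function.Injective (fun H : G.Subgraph => (H.verts, H.Adj)) := by
    intro H1 H2 h
    simp only [Prod.mk.injEq] at h
    exact SimpleGraph.Subgraph.ext h.1 h.2
  exact Finite.of_injective _ hinj

lemma copyCount_le_bound {n : ℕ} {α : Type*} (F : SimpleGraph α) (G : SimpleGraph (Fin n)) :
    copyCount F G ≤ Nat.card (Set (Fin n) × (Fin n → Fin n → Prop)) := by
  have h1 : copyCount F G ≤ Nat.card G.Subgraph :=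
    Nat.card_le_card_of_injective Subtype.val Subtype.val_injective
  refine h1.trans (Nat.card_le_card_of_injective (fun H : G.Subgraph => (H.verts, H.Adj)) ?_)
  intro H1 H2 h
  simp only [Prod.mk.injEq] at h
  exact SimpleGraph.Subgraph.ext h.1 h.2

lemma bddAbove_exGenSet {α β : Type*} (n : ℕ) (F : SimpleGraph α) (H : SimpleGraph β) :
    BddAbove {N | ∃ G : SimpleGraph (Fin n), _root_.Free H G ∧ copyCount F G = N} := by
  refine ⟨Nat.card (Set (Fin n) × (Fin n → Fin n → Prop)), ?_⟩
  rintro N ⟨G, -, rfl⟩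
  exact copyCount_le_bound F G

lemma le_exGen {α β : Type*} {n : ℕ} (F : SimpleGraph α) {H : SimpleGraph β}
    {G : SimpleGraph (Fin n)} (hG : _root_.Free H G) : copyCount F G ≤ exGen n F H :=
  le_csSup (bddAbove_exGenSet n F H) ⟨G, hG, rfl⟩

lemma exists_exGen {α β : Type*} (n : ℕ) (F : SimpleGraph α) (H : SimpleGraph β)
    (hH : ∃ a b, H.Adj a b) :
    ∃ G : SimpleGraph (Fin n), _root_.Free H G ∧ copyCount F G = exGen n F H := by
  have hne : {N | ∃ G : SimpleGraph (Fin n), _root_.Free H G ∧ copyCount F G = N}.Nonempty := by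
    refine ⟨copyCount F (⊥ : SimpleGraph (Fin n)), ⊥, ?_, rfl⟩
    rintro ⟨f, hf⟩
    obtain ⟨a, b, hab⟩ := hH
    exact hf a b hab
  exact Nat.sSup_mem hne (bddAbove_exGenSet n F H)

lemma adj_iff_of_iso_top {V : Type*} {G : SimpleGraph V} {r : ℕ} {H : G.Subgraph}
    (φ : H.coe ≃g (⊤ : SimpleGraph (Fin r))) (a b : V) :
    H.Adj a b ↔ a ≠ b ∧ a ∈ H.verts ∧ b ∈ H.verts := by
  constructor
  · intro h
    exact ⟨h.ne, h.fst_mem, h.snd_mem⟩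
  · rintro ⟨hne, ha, hb⟩
    have h2 : (⊤ : SimpleGraph (Fin r)).Adj (φ ⟨a, ha⟩) (φ ⟨b, hb⟩) := by
      simp only [top_adj, ne_eq]
      intro h
      exact hne (congrArg Subtype.val (φ.injective h))
    exact φ.map_rel_iff.mp h2

/-- The subgraph spanned by a clique. -/
def cliqueSubgraph {V : Type*} (G : SimpleGraph V) (S : Finset V) (hS : G.IsClique ↑S) :
    G.Subgraph where
  verts := ↑S
  Adj a b := a ≠ b ∧ a ∈ S ∧ b ∈ S
  adj_sub h := hS h.2.1 h.2.2 h.1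
  edge_vert h := h.2.1
  symm := ⟨fun a b h => ⟨h.1.symm, h.2.2, h.2.1⟩⟩

noncomputable def cliqueSubgraphIso {V : Type*} {r : ℕ} (G : SimpleGraph V) (S : Finset V)
    (hS : G.IsNClique r S) :
    (cliqueSubgraph G S hS.isClique).coe ≃g (⊤ : SimpleGraph (Fin r)) where
  toEquiv := (Equiv.subtypeEquivRight (fun x => Finset.mem_coe)).trans
    (Finset.equivFinOfCardEq hS.card_eq)
  map_rel_iff' := by
    intro x y
    simp only [Equiv.trans_apply, top_adj, ne_eq, Subgraph.coe_adj]
    show _ ↔ ((x : V) ≠ (y : V) ∧ (x : V) ∈ S ∧ (y : V) ∈ S)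
    constructor
    · intro h
      refine ⟨fun hc => h ?_, Finset.mem_coe.mp x.2, Finset.mem_coe.mp y.2⟩
      rw [Subtype.ext hc]
    · rintro ⟨h1, -, -⟩ hc
      exact h1 (congrArg Subtype.val
        ((Equiv.subtypeEquivRight (fun x => Finset.mem_coe)).injective
          ((Finset.equivFinOfCardEq hS.card_eq).injective hc)))

lemma copyCount_top_eq {V : Type*} [Fintype V] (G : SimpleGraph V) (r : ℕ) :
    _root_.copyCount (⊤ : SimpleGraph (Fin r)) G = Nat.card {S : Finset V // G.IsNClique r S} := by
  classical
  apply le_antisymm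
  · refine Nat.card_le_card_of_injective
      (fun H => ⟨(Set.toFinite H.1.verts).toFinset, ?_, ?_⟩) ?_
    · intro a ha b hb hne
      rw [Set.Finite.coe_toFinset] at ha hb
      exact H.1.adj_sub ((adj_iff_of_iso_top H.2.some a b).mpr ⟨hne, ha, hb⟩)
    · have hcard : Nat.card H.1.verts = r := by
        rw [Nat.card_congr H.2.some.toEquiv]
        simp
      rw [← Set.ncard_eq_toFinset_card H.1.verts (Set.toFinite _), ← Nat.card_coe_set_eq]
      exact hcard
    · intro H1 H2 h
      have hv : H1.1.verts = H2.1.verts := by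
        have := congrArg (fun S : {S : Finset V // G.IsNClique r S} => (S.1 : Set V)) h
        simpa [Set.Finite.coe_toFinset] using this
      apply Subtype.ext
      apply SimpleGraph.Subgraph.ext hv
      ext a b
      rw [adj_iff_of_iso_top H1.2.some a b, adj_iff_of_iso_top H2.2.some a b, hv]
  · refine Nat.card_le_card_of_injective
      (fun S => ⟨cliqueSubgraph G S.1 S.2.isClique, ⟨cliqueSubgraphIso G S.1 S.2⟩⟩) ?_
    intro S1 S2 h
    apply Subtype.ext
    have := congrArg
      (fun H : {H : G.Subgraph // Nonempty (H.coe ≃g (⊤ : SimpleGraph (Fin r)))} => H.1.verts) h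
    exact Finset.coe_injective this

/-- Join of an empty graph on `μ` with `G`. -/
def joinBot {μ ν : Type*} (G : SimpleGraph ν) : SimpleGraph (μ ⊕ ν) where
  Adj x y := match x, y with
    | Sum.inl _, Sum.inl _ => False
    | Sum.inl _, Sum.inr _ => True
    | Sum.inr _, Sum.inl _ => True
    | Sum.inr a, Sum.inr b => G.Adj a b
  symm := ⟨by rintro (a|a) (b|b) h <;> first | exact h | trivial | exact h.symm⟩
  loopless := ⟨by rintro (a|a) h <;> first | exact h | exact G.loopless.irrefl a h⟩

lemma succAbove_val_le {n : ℕ} (j : Fin (n + 1)) (i : Fin n) :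
    (i : ℕ) ≤ (j.succAbove i : ℕ) := by
  rw [Fin.succAbove]
  split
  · exact le_of_eq (Fin.coe_castSucc i).symm
  · rw [Fin.val_succ]
    omega

lemma joinBot_free {r' : ℕ} (s : Fin (r' + 1) → ℕ) (hmono : Monotone s)
    {m k : ℕ} {G : SimpleGraph (Fin k)}
    (hG : _root_.Free (multipartite r' fun i => s (Fin.castLE (by omega) i)) G) :
    _root_.Free (multipartite (r' + 1) s) (joinBot (μ := Fin m) G) := by
  classical
  rintro ⟨f, hf⟩
  apply hG
  have main : ∃ j : Fin (r' + 1), ∀ b : Σ i : Fin (r' + 1), Fin (s i), b.1 ≠ j →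
      ∃ y, f b = Sum.inr y := by
    by_cases hex : ∃ a : Σ i : Fin (r' + 1), Fin (s i), ∃ v, f a = Sum.inl v
    · obtain ⟨a, v, hav⟩ := hex
      refine ⟨a.1, fun b hb => ?_⟩
      cases hfb : f b with
      | inr y => exact ⟨y, rfl⟩
      | inl w =>
        have had : (multipartite (r' + 1) s).Adj b a := hb
        have h2 := hf _ _ had
        rw [hfb, hav] at h2
        exact h2.elim
    · push_neg at hex
      refine ⟨Fin.last r', fun b _ => ?_⟩
      cases hfb : f b with
      | inl w => exact absurd hfb (hex b w)
      | inr y => exact ⟨y, rfl⟩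
  obtain ⟨j, hj⟩ := main
  have hle : ∀ i : Fin r', s (Fin.castLE (by omega) i) ≤ s (j.succAbove i) := by
    intro i
    apply hmono
    rw [Fin.le_def]
    exact succAbove_val_le j i
  set g : (Σ i : Fin r', Fin (s (Fin.castLE (by omega) i))) → Fin k :=
    fun b => (hj ⟨j.succAbove b.1, Fin.castLE (hle b.1) b.2⟩ (j.succAbove_ne b.1)).choose
    with hgdef
  have hg : ∀ b : Σ i : Fin r', Fin (s (Fin.castLE (by omega) i)),
      f ⟨j.succAbove b.1, Fin.castLE (hle b.1) b.2⟩ = Sum.inr (g b) :=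
    fun b => (hj ⟨j.succAbove b.1, Fin.castLE (hle b.1) b.2⟩ (j.succAbove_ne b.1)).choose_spec
  have hginj : Function.Injective g := by
    intro a b hab
    have h1 : f ⟨j.succAbove a.1, Fin.castLE (hle a.1) a.2⟩
        = f ⟨j.succAbove b.1, Fin.castLE (hle b.1) b.2⟩ := by
      rw [hg a, hg b, hab]
    have h2 := f.injective h1
    obtain ⟨i, x⟩ := a
    obtain ⟨i', y⟩ := b
    rw [Sigma.mk.inj_iff] at h2
    obtain ⟨h3, h4⟩ := h2
    have hii : i = i' := j.succAbove_right_injective h3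
    subst hii
    have h5 : Fin.castLE (hle i) x = Fin.castLE (hle i) y := eq_of_heq h4
    have h6 : x = y := Fin.castLE_injective _ h5
    rw [h6]
  refine ⟨⟨g, hginj⟩, ?_⟩
  intro a b hab
  have hne : j.succAbove a.1 ≠ j.succAbove b.1 :=
    fun h => hab (j.succAbove_right_injective h)
  have h2 := hf ⟨j.succAbove a.1, Fin.castLE (hle a.1) a.2⟩
    ⟨j.succAbove b.1, Fin.castLE (hle b.1) b.2⟩ hne
  rw [hg a, hg b] at h2
  exact h2

lemma cliques_joinBot {m k r' : ℕ} (G : SimpleGraph (Fin k)) :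
    m * Nat.card {S : Finset (Fin k) // G.IsNClique r' S} ≤
      Nat.card {S : Finset (Fin m ⊕ Fin k) //
        (joinBot (μ := Fin m) G).IsNClique (r' + 1) S} := by
  classical
  have key := Nat.card_le_card_of_injective
    (fun p : Fin m × {S : Finset (Fin k) // G.IsNClique r' S} =>
      (⟨insert (Sum.inl p.1) (p.2.1.map ⟨Sum.inr, Sum.inr_injective⟩), ?_, ?_⟩ :
        {S : Finset (Fin m ⊕ Fin k) // (joinBot (μ := Fin m) G).IsNClique (r' + 1) S})) ?_
  · calc m * Nat.card {S : Finset (Fin k) // G.IsNClique r' S}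
        = Nat.card (Fin m × {S : Finset (Fin k) // G.IsNClique r' S}) := by
          simp [Nat.card_prod]
      _ ≤ _ := key
  · intro x hx y hy hne
    simp only [Finset.coe_insert, Set.mem_insert_iff, Finset.coe_map,
      Set.mem_image, Finset.mem_coe, Function.Embedding.coeFn_mk] at hx hy
    rcases hx with rfl | ⟨x', hx', rfl⟩ <;> rcases hy with rfl | ⟨y', hy', rfl⟩
    · exact absurd rfl hne
    · trivial
    · trivial
    · have hne' : x' ≠ y' := fun h => hne (by rw [h])
      exact p.2.2.isClique hx' hy' hne'
  · rw [Finset.card_insert_of_notMem (by simp), Finset.card_map, p.2.2.card_eq]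
  · intro p q h
    have h1 := congrArg (fun S : {S : Finset (Fin m ⊕ Fin k) //
      (joinBot (μ := Fin m) G).IsNClique (r' + 1) S} => S.1) h
    simp only at h1
    have hmem : (Sum.inl p.1 : Fin m ⊕ Fin k) ∈
        insert (Sum.inl q.1) (q.2.1.map ⟨Sum.inr, Sum.inr_injective⟩) := by
      rw [← h1]; exact Finset.mem_insert_self _ _
    rw [Finset.mem_insert] at hmem
    rcases hmem with heq | hmem
    · have hv : p.1 = q.1 := Sum.inl_injective heq
      have h2 : (p.2.1.map ⟨Sum.inr, Sum.inr_injective⟩ : Finset (Fin m ⊕ Fin k))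
          = q.2.1.map ⟨Sum.inr, Sum.inr_injective⟩ := by
        have e1 := congrArg (Finset.erase · (Sum.inl p.1 : Fin m ⊕ Fin k)) h1
        simpa [hv, Finset.erase_insert, (by simp : (Sum.inl p.1 : Fin m ⊕ Fin k) ∉
          p.2.1.map ⟨Sum.inr, Sum.inr_injective⟩), (by simp : (Sum.inl q.1 : Fin m ⊕ Fin k) ∉
          q.2.1.map ⟨Sum.inr, Sum.inr_injective⟩)] using e1
      have hS : p.2.1 = q.2.1 := Finset.map_injective _ h2
      exact Prod.ext hv (Subtype.ext hS)
    · exact absurd hmem (by simp)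

lemma key_step {r' : ℕ} (hr' : 2 ≤ r') (s : Fin (r' + 1) → ℕ) (hpos : ∀ i, 1 ≤ s i)
    (hmono : Monotone s) (n : ℕ) :
    n / 2 * exGen (n - n / 2) (⊤ : SimpleGraph (Fin r'))
        (multipartite r' fun i => s (Fin.castLE (by omega) i)) ≤
      exGen n (⊤ : SimpleGraph (Fin (r' + 1))) (multipartite (r' + 1) s) := by
  classical
  set m := n / 2 with hm
  set k := n - n / 2 with hk
  set s' : Fin r' → ℕ := fun i => s (Fin.castLE (by omega) i) with hs'
  have hedge : ∃ a b, (multipartite r' s').Adj a b := by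
    refine ⟨⟨⟨0, by omega⟩, ⟨0, hpos _⟩⟩, ⟨⟨1, by omega⟩, ⟨0, hpos _⟩⟩, ?_⟩
    simp only [multipartite, comap_adj, top_adj, ne_eq, Fin.mk.injEq]
    omega
  obtain ⟨G', hG'free, hG'count⟩ :=
    exists_exGen k (⊤ : SimpleGraph (Fin r')) (multipartite r' s') hedge
  have hmk : m + k = n := by omega
  let e : (Fin m ⊕ Fin k) ≃ Fin n := finSumFinEquiv.trans (finCongr hmk)
  let Gn : SimpleGraph (Fin n) := (joinBot (μ := Fin m) G').comap (⇑e.symm)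
  have hfree : _root_.Free (multipartite (r' + 1) s) Gn := by
    rintro ⟨f, hf⟩
    refine joinBot_free s hmono hG'free ⟨f.trans e.symm.toEmbedding, ?_⟩
    intro a b hab
    exact hf a b hab
  have hcount : m * exGen k (⊤ : SimpleGraph (Fin r')) (multipartite r' s')
      ≤ _root_.copyCount (⊤ : SimpleGraph (Fin (r' + 1))) Gn := by
    rw [copyCount_top_eq, ← hG'count, copyCount_top_eq]
    refine le_trans (cliques_joinBot G') ?_
    refine Nat.card_le_card_of_injective (fun S => ⟨S.1.map e.toEmbedding, ?_, ?_⟩) ?_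
    · intro x hx y hy hne
      simp only [Finset.coe_map, Set.mem_image, Finset.mem_coe, Equiv.coe_toEmbedding] at hx hy
      obtain ⟨x', hx', rfl⟩ := hx
      obtain ⟨y', hy', rfl⟩ := hy
      have hne' : x' ≠ y' := fun h => hne (by rw [h])
      have hadj := S.2.isClique hx' hy' hne'
      have h2 : (joinBot (μ := Fin m) G').Adj (e.symm (e x')) (e.symm (e y')) := by
        rw [Equiv.symm_apply_apply, Equiv.symm_apply_apply]
        exact hadj
      exact h2
    · rw [Finset.card_map, S.2.card_eq]
    · intro S1 S2 h
      apply Subtype.ext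
      exact Finset.map_injective _ (congrArg Subtype.val h)
  exact le_trans hcount (le_exGen _ hfree)

end Auxiliary

/-- If `ex(n, K_{r-1}, K_{s_1,…,s_{r-1}}) = Ω(n^{(r-1) - 1/s_1})`, then
`ex(n, K_r, K_{s_1,…,s_r}) = Ω(n^{r - 1/s_1})`. -/
theorem exGen_omega_of_omega (r : ℕ) (hr : 3 ≤ r) (s : Fin r → ℕ)
    (hpos : ∀ i, 1 ≤ s i) (hmono : Monotone s)
    (hlow : ∃ c : ℝ, 0 < c ∧ ∀ᶠ n : ℕ in atTop,
      c * (n : ℝ) ^ ((r : ℝ) - 1 - 1 / (s ⟨0, by omega⟩ : ℝ)) ≤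
        (exGen n (⊤ : SimpleGraph (Fin (r - 1)))
          (multipartite (r - 1) fun i => s (i.castLE (Nat.sub_le r 1))) : ℝ)) :
    ∃ c : ℝ, 0 < c ∧ ∀ᶠ n : ℕ in atTop,
      c * (n : ℝ) ^ ((r : ℝ) - 1 / (s ⟨0, by omega⟩ : ℝ)) ≤
        (exGen n (⊤ : SimpleGraph (Fin r)) (multipartite r s) : ℝ) := by
  obtain ⟨r', rfl⟩ : ∃ r', r = r' + 1 := ⟨r - 1, by omega⟩
  have hr' : 2 ≤ r' := by omega
  obtain ⟨c, hc, hev⟩ := hlow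
  have hs1 : (1 : ℝ) ≤ ((s ⟨0, by omega⟩ : ℕ) : ℝ) := by exact_mod_cast hpos _
  set α : ℝ := ((r' + 1 : ℕ) : ℝ) - 1 - 1 / ((s ⟨0, by omega⟩ : ℕ) : ℝ) with hα
  have hα0 : 0 ≤ α := by
    have h1 : 1 / ((s ⟨0, by omega⟩ : ℕ) : ℝ) ≤ 1 := by
      rw [div_le_one (by linarith)]
      exact hs1
    have h3 : (3 : ℝ) ≤ ((r' + 1 : ℕ) : ℝ) := by exact_mod_cast hr
    rw [hα]
    linarith
  have htend : Tendsto (fun n : ℕ => n - n / 2) atTop atTop :=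
    tendsto_atTop_atTop.mpr (fun b => ⟨2 * b, fun n hn => by omega⟩)
  have hev2 := htend.eventually hev
  have h2pos : (0 : ℝ) < (2 : ℝ) ^ α := Real.rpow_pos_of_pos (by norm_num) α
  refine ⟨c / (4 * (2 : ℝ) ^ α), by positivity, ?_⟩
  filter_upwards [hev2, eventually_ge_atTop 2] with n hn hn2
  have hn0 : (0 : ℝ) < (n : ℝ) := by
    have : 0 < n := by omega
    exact_mod_cast this
  set E' : ℕ := exGen (n - n / 2) (⊤ : SimpleGraph (Fin r'))
    (multipartite r' fun i => s (Fin.castLE (by omega) i)) with hE'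
  have hn' : c * ((n - n / 2 : ℕ) : ℝ) ^ α ≤ (E' : ℝ) := hn
  have hkey := key_step hr' s hpos hmono n
  have hkey' : ((n / 2 : ℕ) : ℝ) * (E' : ℝ) ≤
      ((exGen n (⊤ : SimpleGraph (Fin (r' + 1))) (multipartite (r' + 1) s) : ℕ) : ℝ) := by
    exact_mod_cast hkey
  have h4 : (n : ℝ) / 4 ≤ ((n / 2 : ℕ) : ℝ) := by
    have h : n ≤ 4 * (n / 2) := by omega
    have h' : (n : ℝ) ≤ 4 * ((n / 2 : ℕ) : ℝ) := by exact_mod_cast h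
    linarith
  have h2 : (n : ℝ) / 2 ≤ ((n - n / 2 : ℕ) : ℝ) := by
    have h : n ≤ 2 * (n - n / 2) := by omega
    have h' : (n : ℝ) ≤ 2 * ((n - n / 2 : ℕ) : ℝ) := by exact_mod_cast h
    linarith
  have hstep1 : c / (4 * (2 : ℝ) ^ α) * (n : ℝ) ^ (((r' + 1 : ℕ) : ℝ)
      - 1 / ((s ⟨0, by omega⟩ : ℕ) : ℝ)) = ((n : ℝ) / 4) * (c * ((n : ℝ) / 2) ^ α) := by
    rw [show ((r' + 1 : ℕ) : ℝ) - 1 / ((s ⟨0, by omega⟩ : ℕ) : ℝ) = 1 + α by rw [hα]; ring]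
    rw [Real.rpow_add hn0, Real.rpow_one, Real.div_rpow (le_of_lt hn0) (by norm_num)]
    field_simp
  calc c / (4 * (2 : ℝ) ^ α) * (n : ℝ) ^ (((r' + 1 : ℕ) : ℝ)
        - 1 / ((s ⟨0, by omega⟩ : ℕ) : ℝ))
      = ((n : ℝ) / 4) * (c * ((n : ℝ) / 2) ^ α) := hstep1
    _ ≤ ((n : ℝ) / 4) * (c * ((n - n / 2 : ℕ) : ℝ) ^ α) := by
        have := Real.rpow_le_rpow (by positivity) h2 hα0
        have hcle : c * ((n : ℝ) / 2) ^ α ≤ c * ((n - n / 2 : ℕ) : ℝ) ^ α :=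
          mul_le_mul_of_nonneg_left this (le_of_lt hc)
        exact mul_le_mul_of_nonneg_left hcle (by positivity)
    _ ≤ ((n / 2 : ℕ) : ℝ) * (c * ((n - n / 2 : ℕ) : ℝ) ^ α) := by
        exact mul_le_mul_of_nonneg_right h4 (by positivity)
    _ ≤ ((n / 2 : ℕ) : ℝ) * (E' : ℝ) := by
        exact mul_le_mul_of_nonneg_left hn' (by positivity)
    _ ≤ _ := hkey'
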